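/- For π, ρ ∈ NC(n), one has A(π) ∨ A(ρ) = 1_{2n} in the lattice NC(2n) if and only if π ∨ ρ = 1_n and π ∧ ρ = 0_n in the lattice NC(n). -/
import Mathlib


open scoped Classical

/-- A setoid (partition) of `Fin n` is non-crossing if there is no crossing
`a < b < c < d` with `a ∼ c`, `b ∼ d` but `a` and `b` in distinct blocks. -/
def IsNC {n : ℕ} (S : Setoid (Fin n)) : Prop :=
  ∀ a b c d : Fin n, a < b → b < c → c < d → S.r a c → S.r b d → S.r a b

/-- A partition is a pairing if every block has exactly two elements. -/
def IsPairing {m : ℕ} (T : Setoid (Fin m)) : Prop :=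
  ∀ x : Fin m, ∃ y : Fin m, y ≠ x ∧ T.r x y ∧ ∀ z : Fin m, T.r x z → z = x ∨ z = y

/-- The block of `i` in the partition `S`, as a finset. -/
noncomputable def blockOf {n : ℕ} (S : Setoid (Fin n)) (i : Fin n) : Finset (Fin n) :=
  Finset.univ.filter (fun j => S.r i j)

lemma blockOf_nonempty {n : ℕ} (S : Setoid (Fin n)) (i : Fin n) :
    (blockOf S i).Nonempty :=
  ⟨i, by simp [blockOf, S.iseqv.refl i]⟩

/-- The permutation `P_S` which performs an increasing cycle on every block of `S`:
it sends `i` to the next larger element of its block, or to the minimum of the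
block if `i` is the largest element of its block. -/
noncomputable def nextP {n : ℕ} (S : Setoid (Fin n)) (i : Fin n) : Fin n :=
  if h : ((blockOf S i).filter (fun j => i < j)).Nonempty
  then ((blockOf S i).filter (fun j => i < j)).min' h
  else (blockOf S i).min' (blockOf_nonempty S i)

/-- The inverse permutation `P_S⁻¹` (decreasing cycle on every block of `S`). -/
noncomputable def prevP {n : ℕ} (S : Setoid (Fin n)) (i : Fin n) : Fin n :=
  if h : ((blockOf S i).filter (fun j => j < i)).Nonempty
  then ((blockOf S i).filter (fun j => j < i)).max' h
  else (blockOf S i).max' (blockOf_nonempty S i)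

/-- `0`-indexed version of the point `2i-1` of `{1,…,2n}`. -/
def dEven {n : ℕ} (j : Fin n) : Fin (2*n) := ⟨2*j.val, by have := j.isLt; omega⟩

/-- `0`-indexed version of the point `2i` of `{1,…,2n}`. -/
def dOdd {n : ℕ} (j : Fin n) : Fin (2*n) := ⟨2*j.val+1, by have := j.isLt; omega⟩

/-- The doubling construction `π ↦ A(π)`: the pairing of `{1,…,2n}` generated by
pairing each point `2i` with `2P_π(i) - 1`, so that the associated permutation
satisfies `P_{A(π)}(2i) = 2P_π(i) - 1` and `P_{A(π)}(2i-1) = 2P_π⁻¹(i)`. -/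
noncomputable def archSetoid {n : ℕ} (S : Setoid (Fin n)) : Setoid (Fin (2*n)) :=
  Relation.EqvGen.setoid (fun a b => ∃ j : Fin n, a = dOdd j ∧ b = dEven (nextP S j))

/-- The meandric system permutation `M_{π,ρ} ∈ S_{2n}`, defined by
`M_{π,ρ}(2i-1) = 2P_π⁻¹(i)` and `M_{π,ρ}(2i) = 2P_ρ(i) - 1` (here `0`-indexed). -/
noncomputable def meanderMap {n : ℕ} (π ρ : Setoid (Fin n)) (x : Fin (2*n)) : Fin (2*n) :=
  if x.val % 2 = 0
  then dOdd (prevP π ⟨x.val / 2, by have := x.isLt; omega⟩)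
  else dEven (nextP ρ ⟨x.val / 2, by have := x.isLt; omega⟩)

/-- The orbit partition of a map. -/
def orbitSetoid {m : ℕ} (f : Fin m → Fin m) : Setoid (Fin m) :=
  Relation.EqvGen.setoid (fun a b => f a = b)

/-- Number of orbits of a map. -/
noncomputable def numOrbits {m : ℕ} (f : Fin m → Fin m) : ℕ :=
  Nat.card (Quotient (orbitSetoid f))

/-- `S` is a union of blocks of the partition `T`. -/
def IsBlockUnion {m : ℕ} (T : Setoid (Fin m)) (S : Set (Fin m)) : Prop :=
  ∀ x ∈ S, ∀ y, T.r x y → y ∈ S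

/-- `S` is invariant under `f`. -/
def MInvariant {m : ℕ} (f : Fin m → Fin m) (S : Set (Fin m)) : Prop :=
  ∀ x ∈ S, f x ∈ S

/-- The meandric system `M_{π,ρ}` is reducible: some proper subinterval
`{a,…,b}` of `{1,…,2n}` is invariant under `M_{π,ρ}`. -/
noncomputable def Reducible {n : ℕ} (π ρ : Setoid (Fin n)) : Prop :=
  ∃ a b : Fin (2*n), a ≤ b ∧ b.val - a.val < 2*n - 1 ∧
    MInvariant (meanderMap π ρ) {x | a ≤ x ∧ x ≤ b}

/-- The join in the lattice of non-crossing partitions: the smallest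
non-crossing partition above both `π` and `ρ`. -/
noncomputable def ncJoin {m : ℕ} (π ρ : Setoid (Fin m)) : Setoid (Fin m) :=
  sInf {τ | IsNC τ ∧ π ≤ τ ∧ ρ ≤ τ}

/-- The moment-cumulant formula of free probability: `mom n` is the sum over all
non-crossing partitions of `{1,…,n}` of the products of cumulants `κ` indexed
by the block sizes.  This uniquely determines the free cumulants `κ n`, `n ≥ 1`,
of a sequence of moments. -/
def MomCum {F : Type*} [Field F] (mom κ : ℕ → F) : Prop :=
  ∀ n : ℕ, 0 < n →
    mom n = ∑ᶠ S ∈ {S : Setoid (Fin n) | IsNC S}, ∏ᶠ B ∈ Setoid.classes S, κ B.ncard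

/-- The number of irreducible meandric systems on `2k` bridges, described as the
number of pairs `(π,ρ) ∈ NC(k)²` with `π ∨ ρ = 1_k`, `π ∧ ρ = 0_k`. -/
noncomputable def mirr (k : ℕ) : ℕ :=
  Nat.card {pr : Setoid (Fin k) × Setoid (Fin k) //
    IsNC pr.1 ∧ IsNC pr.2 ∧ ncJoin pr.1 pr.2 = ⊤ ∧ pr.1 ⊓ pr.2 = ⊥}

/-- The number of pairs `(π,ρ) ∈ NC(n)²` whose meandric system `M_{π,ρ}` has
exactly `k` orbits (connected components). -/
noncomputable def mcount (n k : ℕ) : ℕ :=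
  Nat.card {pr : Setoid (Fin n) × Setoid (Fin n) //
    IsNC pr.1 ∧ IsNC pr.2 ∧ numOrbits (meanderMap pr.1 pr.2) = k}

/-- The number of meanders on `2n` bridges. -/
noncomputable def meanderNum (n : ℕ) : ℕ := mcount n 1
section A
variable {n : ℕ}

lemma mem_blockOf_iff {S : Setoid (Fin n)} {i j : Fin n} : j ∈ blockOf S i ↔ S.r i j := by
  simp [blockOf]

lemma nextP_mem {S : Setoid (Fin n)} (i : Fin n) : nextP S i ∈ blockOf S i := by
  unfold nextP
  split_ifs with h
  · exact Finset.mem_of_mem_filter _ (Finset.min'_mem _ h)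
  · exact Finset.min'_mem _ _

lemma rel_nextP (S : Setoid (Fin n)) (i : Fin n) : S.r i (nextP S i) :=
  mem_blockOf_iff.mp (nextP_mem i)

lemma blockOf_eq {S : Setoid (Fin n)} {i j : Fin n} (h : S.r i j) :
    blockOf S j = blockOf S i := by
  ext x
  simp only [mem_blockOf_iff]
  exact ⟨fun hx => S.iseqv.trans h hx, fun hx => S.iseqv.trans (S.iseqv.symm h) hx⟩

lemma lt_nextP_of {S : Setoid (Fin n)} {a b : Fin n} (h : S.r a b) (hab : a < b) :
    a < nextP S a ∧ nextP S a ≤ b := by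
  have hb : b ∈ (blockOf S a).filter (fun j => a < j) := by
    simp [Finset.mem_filter, mem_blockOf_iff, h, hab]
  have hne : ((blockOf S a).filter (fun j => a < j)).Nonempty := ⟨b, hb⟩
  rw [nextP, dif_pos hne]
  exact ⟨(Finset.mem_filter.mp (Finset.min'_mem _ hne)).2, Finset.min'_le _ _ hb⟩

lemma nextP_injective (S : Setoid (Fin n)) : Function.Injective (nextP S) := by
  have aux : ∀ a b : Fin n, a < b → S.r a b → nextP S a = nextP S b → False := by
    intro a b hab hr he
    have h1 := lt_nextP_of hr hab
    by_cases h2 : ((blockOf S b).filter (fun j => b < j)).Nonempty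
    · have : b < nextP S b := by
        rw [nextP, dif_pos h2]
        exact (Finset.mem_filter.mp (Finset.min'_mem _ h2)).2
      rw [← he] at this
      exact absurd (lt_of_le_of_lt h1.2 this) (lt_irrefl _)
    · have : nextP S b ≤ a := by
        rw [nextP, dif_neg h2]
        exact Finset.min'_le _ _ (mem_blockOf_iff.mpr (S.iseqv.symm hr))
      rw [← he] at this
      exact absurd (lt_of_lt_of_le h1.1 this) (lt_irrefl _)
  intro a b he
  by_contra hne
  have hr : S.r a b :=
    S.iseqv.trans (rel_nextP S a) (S.iseqv.symm (he ▸ rel_nextP S b))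
  rcases lt_trichotomy a b with h | h | h
  · exact aux a b h hr he
  · exact hne h
  · exact aux b a h (S.iseqv.symm hr) he.symm

end A

section B
variable {n : ℕ}

lemma block_closed {S : Setoid (Fin n)} {s : Set (Fin n)}
    (hs : ∀ x ∈ s, nextP S x ∈ s) {j m : Fin n} (hj : j ∈ s) (hm : S.r j m) : m ∈ s := by
  classical
  set B := blockOf S j with hB
  set T := B.filter (fun x => x ∈ s) with hT
  have hjT : j ∈ T := by
    simp only [hT, Finset.mem_filter]
    exact ⟨mem_blockOf_iff.mpr (S.iseqv.refl j), hj⟩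
  have hTne : T.Nonempty := ⟨j, hjT⟩
  have hTB : ∀ x ∈ T, x ∈ B := fun x hx => (Finset.mem_filter.mp hx).1
  have hTs : ∀ x ∈ T, x ∈ s := fun x hx => (Finset.mem_filter.mp hx).2
  have hrelB : ∀ x ∈ B, S.r j x := fun x hx => mem_blockOf_iff.mp hx
  have hTclosed : ∀ x ∈ T, nextP S x ∈ T := by
    intro x hx
    simp only [hT, Finset.mem_filter]
    refine ⟨mem_blockOf_iff.mpr ?_, hs x (hTs x hx)⟩
    exact S.iseqv.trans (hrelB x (hTB x hx)) (rel_nextP S x)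
  -- blockOf of any element of B equals B
  have hblk : ∀ x ∈ B, blockOf S x = B := fun x hx => blockOf_eq (hrelB x hx)
  set M := T.max' hTne with hM
  have hMT : M ∈ T := Finset.max'_mem _ _
  have hMB : M ∈ B := hTB M hMT
  -- no element of B exceeds M
  have hmax : ∀ x ∈ B, x ≤ M := by
    intro x hx
    by_contra hlt
    push_neg at hlt
    have hrMx : S.r M x := S.iseqv.trans (S.iseqv.symm (hrelB M hMB)) (hrelB x hx)
    have h1 := lt_nextP_of hrMx hlt
    have : nextP S M ∈ T := hTclosed M hMT
    exact absurd (Finset.le_max' T _ this) (not_le.mpr h1.1)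
  have hBne : B.Nonempty := ⟨j, mem_blockOf_iff.mpr (S.iseqv.refl j)⟩
  -- min of B is in T
  have hminT : B.min' hBne ∈ T := by
    have hemp : ((blockOf S M).filter (fun x => M < x)) = ∅ := by
      rw [hblk M hMB]
      apply Finset.filter_eq_empty_iff.mpr
      intro x hx
      exact not_lt.mpr (hmax x hx)
    have : nextP S M = B.min' hBne := by
      rw [nextP, dif_neg (by rw [hemp]; exact Finset.not_nonempty_empty)]
      congr 1
      exact hblk M hMB
    exact this ▸ hTclosed M hMT
  -- all of B is in T, by strong induction on value
  have main : ∀ v : ℕ, ∀ y ∈ B, y.val ≤ v → y ∈ T := by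
    intro v
    induction v with
    | zero =>
      intro y hy hv
      have h1 : B.min' hBne ≤ y := Finset.min'_le _ _ hy
      have h2 : y = B.min' hBne := le_antisymm (Fin.le_def.mpr (by omega)) h1
      exact h2 ▸ hminT
    | succ v ih =>
      intro y hy hv
      by_cases hex : (B.filter (fun w => w < y)).Nonempty
      · have hxmem := Finset.max'_mem _ hex
        have hxB : (B.filter (fun w => w < y)).max' hex ∈ B := (Finset.mem_filter.mp hxmem).1
        have hxy : (B.filter (fun w => w < y)).max' hex < y := (Finset.mem_filter.mp hxmem).2
        generalize hxdef : (B.filter (fun w => w < y)).max' hex = x at hxB hxy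
        have hxmax : ∀ z ∈ B, z < y → z ≤ x := by
          intro z hz hzy
          rw [← hxdef]
          have hmem : z ∈ B.filter (fun w => w < y) := Finset.mem_filter.mpr ⟨hz, hzy⟩
          exact Finset.le_max' _ _ hmem
        have hxT : x ∈ T := ih x hxB (by have := hxy; omega)
        have hGne : ((blockOf S x).filter (fun z => x < z)).Nonempty := by
          rw [hblk x hxB]; exact ⟨y, Finset.mem_filter.mpr ⟨hy, hxy⟩⟩
        have hnext : nextP S x = y := by
          rw [nextP, dif_pos hGne]
          apply le_antisymm
          · exact Finset.min'_le _ _ (by rw [hblk x hxB]; exact Finset.mem_filter.mpr ⟨hy, hxy⟩)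
          · apply Finset.le_min'
            intro z hz
            rw [hblk x hxB] at hz
            obtain ⟨hzB, hzx⟩ := Finset.mem_filter.mp hz
            by_contra hzy
            push_neg at hzy
            exact absurd hzx (not_lt.mpr (hxmax z hzB hzy))
        exact hnext ▸ hTclosed x hxT
      · -- y is the minimum of B
        have : y = B.min' hBne := by
          apply le_antisymm
          · apply Finset.le_min'
            intro z hz
            by_contra hzy
            push_neg at hzy
            exact hex ⟨z, Finset.mem_filter.mpr ⟨hz, hzy⟩⟩
          · exact Finset.min'_le _ _ hy
        exact this ▸ hminT
  have hmB : m ∈ B := mem_blockOf_iff.mpr hm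
  exact hTs m (main m.val m hmB le_rfl)

end B

section C
variable {n : ℕ}

lemma nc_shift {π : Setoid (Fin n)} (hπ : IsNC π) {i k : Fin n} (hik : π.r i k)
    (hlt : i < k) (j : Fin n) :
    (i ≤ j ∧ j < k) ↔ (i < nextP π j ∧ nextP π j ≤ k) := by
  have forward : ∀ j' : Fin n, i ≤ j' → j' < k → i < nextP π j' ∧ nextP π j' ≤ k := by
    intro j h1 h2
    by_cases hjk : π.r j k
    · obtain ⟨ha, hb⟩ := lt_nextP_of hjk h2
      exact ⟨lt_of_le_of_lt h1 ha, hb⟩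
    · have hij : ¬ π.r i j := fun h => hjk (π.iseqv.trans (π.iseqv.symm h) hik)
      have hji : i < j := lt_of_le_of_ne h1 (by rintro rfl; exact hij (π.iseqv.refl i))
      have hy : π.r j (nextP π j) := rel_nextP π j
      have hyi : nextP π j ≠ i := fun h => hij (π.iseqv.symm (h ▸ hy))
      have hyk : nextP π j ≠ k := fun h => hjk (h ▸ hy)
      constructor
      · rcases lt_trichotomy (nextP π j) i with h | h | h
        · exact absurd (hπ _ _ _ _ h hji h2 (π.iseqv.symm hy) hik)
            (fun hr => hij (π.iseqv.trans (π.iseqv.symm hr) (π.iseqv.symm hy)))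
        · exact absurd h hyi
        · exact h
      · by_contra hgt
        push_neg at hgt
        exact hij (hπ _ _ _ _ hji h2 hgt hik hy)
  constructor
  · intro ⟨h1, h2⟩; exact forward j h1 h2
  · intro ⟨h1, h2⟩
    have himg : Finset.image (nextP π) (Finset.Ico i k) ⊆ Finset.Ioc i k := by
      intro y hy
      obtain ⟨j', hj', rfl⟩ := Finset.mem_image.mp hy
      obtain ⟨a, b⟩ := Finset.mem_Ico.mp hj'
      exact Finset.mem_Ioc.mpr (forward j' a b)
    have hcard : (Finset.image (nextP π) (Finset.Ico i k)).card = (Finset.Ioc i k).card := by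
      rw [Finset.card_image_of_injective _ (nextP_injective π), Fin.card_Ico, Fin.card_Ioc]
    have heq : Finset.image (nextP π) (Finset.Ico i k) = Finset.Ioc i k :=
      Finset.eq_of_subset_of_card_le himg (le_of_eq hcard.symm)
    have : nextP π j ∈ Finset.Ioc i k := Finset.mem_Ioc.mpr ⟨h1, h2⟩
    rw [← heq] at this
    obtain ⟨j', hj', hje⟩ := Finset.mem_image.mp this
    rw [nextP_injective π hje] at hj'
    exact Finset.mem_Ico.mp hj'

lemma rel_of_shift {π : Setoid (Fin n)} {i k : Fin n} (hlt : i < k)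
    (h : ∀ j : Fin n, (i ≤ j ∧ j < k) ↔ (i < nextP π j ∧ nextP π j ≤ k)) : π.r i k := by
  classical
  have himg : Finset.image (nextP π) (Finset.Ico i k) ⊆ Finset.Ioc i k := by
    intro y hy
    obtain ⟨j', hj', rfl⟩ := Finset.mem_image.mp hy
    exact Finset.mem_Ioc.mpr ((h j').mp (Finset.mem_Ico.mp hj'))
  have hcard : (Finset.image (nextP π) (Finset.Ico i k)).card = (Finset.Ioc i k).card := by
    rw [Finset.card_image_of_injective _ (nextP_injective π), Fin.card_Ico, Fin.card_Ioc]
  have heq : Finset.image (nextP π) (Finset.Ico i k) = Finset.Ioc i k :=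
    Finset.eq_of_subset_of_card_le himg (le_of_eq hcard.symm)
  by_contra hk
  set B0 := blockOf π i with hB0
  set C := B0 ∩ Finset.Ico i k with hC
  set D := B0 ∩ Finset.Ioc i k with hD
  have hCD : Finset.image (nextP π) C = D := by
    apply Finset.Subset.antisymm
    · intro y hy
      obtain ⟨j', hj', rfl⟩ := Finset.mem_image.mp hy
      obtain ⟨hjB, hjI⟩ := Finset.mem_inter.mp hj'
      refine Finset.mem_inter.mpr ⟨?_, Finset.mem_Ioc.mpr ((h j').mp (Finset.mem_Ico.mp hjI))⟩
      exact mem_blockOf_iff.mpr (π.iseqv.trans (mem_blockOf_iff.mp hjB) (rel_nextP π j'))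
    · intro y hy
      obtain ⟨hyB, hyI⟩ := Finset.mem_inter.mp hy
      have : y ∈ Finset.image (nextP π) (Finset.Ico i k) := heq ▸ hyI
      obtain ⟨j', hj', rfl⟩ := Finset.mem_image.mp this
      refine Finset.mem_image.mpr ⟨j', Finset.mem_inter.mpr ⟨?_, hj'⟩, rfl⟩
      exact mem_blockOf_iff.mpr (π.iseqv.trans (mem_blockOf_iff.mp hyB) (π.iseqv.symm (rel_nextP π j')))
  have hcardCD : C.card = D.card := by
    rw [← hCD, Finset.card_image_of_injective _ (nextP_injective π)]
  have hiC : i ∈ C := Finset.mem_inter.mpr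
    ⟨mem_blockOf_iff.mpr (π.iseqv.refl i), Finset.mem_Ico.mpr ⟨le_refl i, hlt⟩⟩
  have hDsub : D ⊆ C.erase i := by
    intro y hy
    obtain ⟨hyB, hyI⟩ := Finset.mem_inter.mp hy
    obtain ⟨h1, h2⟩ := Finset.mem_Ioc.mp hyI
    have hyk : y ≠ k := fun he => hk (he ▸ mem_blockOf_iff.mp hyB)
    refine Finset.mem_erase.mpr ⟨ne_of_gt h1, Finset.mem_inter.mpr ⟨hyB, Finset.mem_Ico.mpr ⟨le_of_lt h1, lt_of_le_of_ne h2 hyk⟩⟩⟩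
  have h1 : D.card ≤ C.card - 1 := by
    have := Finset.card_le_card hDsub
    rwa [Finset.card_erase_of_mem hiC] at this
  have h2 : 0 < C.card := Finset.card_pos.mpr ⟨i, hiC⟩
  omega

lemma no_shift_IcoIcc {S : Setoid (Fin n)} {i k : Fin n} (hle : i ≤ k)
    (h : ∀ j : Fin n, (i ≤ j ∧ j < k) ↔ (i ≤ nextP S j ∧ nextP S j ≤ k)) : False := by
  classical
  have hsurj : Function.Surjective (nextP S) :=
    Finite.surjective_of_injective (nextP_injective S)
  have hsub : Finset.Icc i k ⊆ Finset.image (nextP S) (Finset.Ico i k) := by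
    intro y hy
    obtain ⟨j, rfl⟩ := hsurj y
    exact Finset.mem_image.mpr ⟨j, Finset.mem_Ico.mpr ((h j).mpr (Finset.mem_Icc.mp hy)), rfl⟩
  have := Finset.card_le_card hsub
  rw [Finset.card_image_of_injective _ (nextP_injective S), Fin.card_Ico, Fin.card_Icc] at this
  have : (k.val + 1 - i.val) ≤ k.val - i.val := this
  have hik : i.val ≤ k.val := hle
  omega

lemma no_shift_IccIoc {S : Setoid (Fin n)} {i k : Fin n} (hle : i ≤ k)
    (h : ∀ j : Fin n, (i ≤ j ∧ j ≤ k) ↔ (i < nextP S j ∧ nextP S j ≤ k)) : False := by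
  classical
  have hsub : Finset.image (nextP S) (Finset.Icc i k) ⊆ Finset.Ioc i k := by
    intro y hy
    obtain ⟨j, hj, rfl⟩ := Finset.mem_image.mp hy
    exact Finset.mem_Ioc.mpr ((h j).mp (Finset.mem_Icc.mp hj))
  have := Finset.card_le_card hsub
  rw [Finset.card_image_of_injective _ (nextP_injective S), Fin.card_Icc, Fin.card_Ioc] at this
  have hik : i.val ≤ k.val := hle
  omega

end C

section D
variable {m : ℕ}

lemma exists_interval_block {σ : Setoid (Fin m)} (hσ : IsNC σ) (hne : σ ≠ ⊤) :
    ∃ a b : Fin m, a ≤ b ∧ (∃ z : Fin m, z < a ∨ b < z) ∧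
      ∀ x y : Fin m, a ≤ x → x ≤ b → σ.r x y → a ≤ y ∧ y ≤ b := by
  classical
  have hex : ∃ x0 y0 : Fin m, ¬ σ.r x0 y0 := by
    by_contra hc
    push_neg at hc
    exact hne (Setoid.eq_top_iff.mpr hc)
  obtain ⟨x0, y0, hxy0⟩ := hex
  -- choose p minimizing the span of its block
  obtain ⟨p, -, hp⟩ := Finset.exists_min_image Finset.univ
    (fun q => ((blockOf σ q).max' (blockOf_nonempty σ q)).val
      - ((blockOf σ q).min' (blockOf_nonempty σ q)).val) ⟨x0, Finset.mem_univ x0⟩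
  set a := (blockOf σ p).min' (blockOf_nonempty σ p) with ha
  set b := (blockOf σ p).max' (blockOf_nonempty σ p) with hb
  have hpB : p ∈ blockOf σ p := mem_blockOf_iff.mpr (σ.iseqv.refl p)
  have hap : a ≤ p := Finset.min'_le _ _ hpB
  have hpb : p ≤ b := Finset.le_max' _ _ hpB
  have haB : a ∈ blockOf σ p := Finset.min'_mem _ _
  have hbB : b ∈ blockOf σ p := Finset.max'_mem _ _
  have hra : σ.r p a := mem_blockOf_iff.mp haB
  have hrb : σ.r p b := mem_blockOf_iff.mp hbB
  have hrab : σ.r a b := σ.iseqv.trans (σ.iseqv.symm hra) hrb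
  have hinv : ∀ x y : Fin m, a ≤ x → x ≤ b → σ.r x y → a ≤ y ∧ y ≤ b := by
    intro x y hax hxb hxy
    by_cases hpx : σ.r p x
    · have hy : y ∈ blockOf σ p := mem_blockOf_iff.mpr (σ.iseqv.trans hpx hxy)
      exact ⟨Finset.min'_le _ _ hy, Finset.le_max' _ _ hy⟩
    · have hxa : x ≠ a := fun he => hpx (he ▸ hra)
      have hxb' : x ≠ b := fun he => hpx (he ▸ hrb)
      have h1 : a < x := lt_of_le_of_ne hax (Ne.symm hxa)
      have h2 : x < b := lt_of_le_of_ne hxb hxb'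
      constructor
      · by_contra hya
        push_neg at hya
        have := hσ y a x b hya h1 h2 (σ.iseqv.symm hxy) hrab
        exact hpx (σ.iseqv.trans hra (σ.iseqv.trans (σ.iseqv.symm this) (σ.iseqv.symm hxy)))
      · by_contra hby
        push_neg at hby
        have := hσ a x b y h1 h2 hby hrab hxy
        exact hpx (σ.iseqv.trans hra (σ.iseqv.symm (σ.iseqv.trans (σ.iseqv.symm this) (σ.iseqv.refl a))))
  refine ⟨a, b, le_trans hap hpb, ?_, hinv⟩
  by_contra hall
  push_neg at hall
  have hall' : ∀ z : Fin m, a ≤ z ∧ z ≤ b := by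
    intro z
    exact hall z
  -- find q with ¬ σ.r p q among x0 y0
  have hq : ∃ q : Fin m, ¬ σ.r p q := by
    by_cases h0 : σ.r p x0
    · exact ⟨y0, fun h => hxy0 (σ.iseqv.trans (σ.iseqv.symm h0) h)⟩
    · exact ⟨x0, h0⟩
  obtain ⟨q, hpq⟩ := hq
  obtain ⟨haq, hqb⟩ := hall' q
  have hqa : q ≠ a := fun he => hpq (he ▸ hra)
  have hqb' : q ≠ b := fun he => hpq (he ▸ hrb)
  have h1 : a < q := lt_of_le_of_ne haq (Ne.symm hqa)
  have h2 : q < b := lt_of_le_of_ne hqb hqb'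
  -- block of q is contained in the open interval (a,b)
  have hblkq : ∀ y, σ.r q y → a < y ∧ y < b := by
    intro y hy
    obtain ⟨hy1, hy2⟩ := hinv q y haq hqb hy
    have hya : y ≠ a := fun he => hpq (σ.iseqv.trans hra (σ.iseqv.symm (he ▸ hy)))
    have hyb : y ≠ b := fun he => hpq (σ.iseqv.trans hrb (σ.iseqv.symm (he ▸ hy)))
    exact ⟨lt_of_le_of_ne hy1 (Ne.symm hya), lt_of_le_of_ne hy2 hyb⟩
  set aq := (blockOf σ q).min' (blockOf_nonempty σ q) with haq'
  set bq := (blockOf σ q).max' (blockOf_nonempty σ q) with hbq'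
  have h3 : a < aq ∧ aq < b := hblkq aq (mem_blockOf_iff.mp (Finset.min'_mem _ _))
  have h4 : a < bq ∧ bq < b := hblkq bq (mem_blockOf_iff.mp (Finset.max'_mem _ _))
  have h5 : aq ≤ bq := Finset.min'_le _ _ (Finset.max'_mem _ _)
  have := hp q (Finset.mem_univ q)
  have e1 : a.val < aq.val := h3.1
  have e2 : bq.val < b.val := h4.2
  have e3 : aq.val ≤ bq.val := h5
  omega

def inIv {k : ℕ} (a b x : Fin k) : Prop := a ≤ x ∧ x ≤ b

def ivSetoid {k : ℕ} (a b : Fin k) : Setoid (Fin k) :=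
  ⟨fun x y => (inIv a b x ↔ inIv a b y),
   ⟨fun _ => Iff.rfl, fun h => h.symm, fun h1 h2 => h1.trans h2⟩⟩

lemma ivSetoid_r {k : ℕ} (a b x y : Fin k) :
    (ivSetoid a b).r x y ↔ (inIv a b x ↔ inIv a b y) := Iff.rfl

lemma ivSetoid_isNC {k : ℕ} (a b : Fin k) : IsNC (ivSetoid a b) := by
  intro p q r s h1 h2 h3 hpr hqs
  rw [ivSetoid_r] at *
  by_cases hp : inIv a b p
  · have hr : inIv a b r := hpr.mp hp
    have hq : inIv a b q := ⟨le_trans hp.1 (le_of_lt h1), le_trans (le_of_lt h2) hr.2⟩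
    exact iff_of_true hp hq
  · apply iff_of_false hp
    intro hq
    have hs : inIv a b s := hqs.mp hq
    have hr : inIv a b r := ⟨le_trans hq.1 (le_of_lt h2), le_trans (le_of_lt h3) hs.2⟩
    exact hp (hpr.mpr hr)

lemma ivSetoid_ne_top {k : ℕ} {a b u v : Fin k} (hu : inIv a b u) (hv : ¬ inIv a b v) :
    ivSetoid a b ≠ ⊤ := by
  intro h
  have := Setoid.eq_top_iff.mp h u v
  rw [ivSetoid_r] at this
  exact hv (this.mp hu)

end D

section E
variable {n : ℕ}

lemma dEven_val (j : Fin n) : (dEven j).val = 2*j.val := rfl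
lemma dOdd_val (j : Fin n) : (dOdd j).val = 2*j.val+1 := rfl

lemma inIv_iff {k : ℕ} (a b x : Fin k) : inIv a b x ↔ (a.val ≤ x.val ∧ x.val ≤ b.val) :=
  Iff.rfl

lemma arch_le_iff {π : Setoid (Fin n)} {τ : Setoid (Fin (2*n))} :
    archSetoid π ≤ τ ↔ ∀ j : Fin n, τ.r (dOdd j) (dEven (nextP π j)) := by
  constructor
  · intro h j
    exact Setoid.le_def.mp h (Relation.EqvGen.rel _ _ ⟨j, rfl, rfl⟩)
  · intro h
    apply Setoid.eqvGen_le
    rintro x y ⟨j, rfl, rfl⟩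
    exact h j

lemma ncJoin_ne_top {k : ℕ} {π ρ τ : Setoid (Fin k)} (h1 : IsNC τ) (h2 : π ≤ τ) (h3 : ρ ≤ τ)
    (hne : τ ≠ ⊤) : ncJoin π ρ ≠ ⊤ := by
  intro h
  apply hne
  have hle : ncJoin π ρ ≤ τ := sInf_le ⟨h1, h2, h3⟩
  rw [h] at hle
  exact top_le_iff.mp hle

lemma ml2 {π ρ : Setoid (Fin n)} (h : ncJoin π ρ ≠ ⊤) :
    ncJoin (archSetoid π) (archSetoid ρ) ≠ ⊤ := by
  rw [ncJoin] at h
  have h' : ∃ σ ∈ {τ | IsNC τ ∧ π ≤ τ ∧ ρ ≤ τ}, σ ≠ ⊤ := by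
    by_contra hc
    push_neg at hc
    exact h (sInf_eq_top.mpr hc)
  obtain ⟨σ, ⟨hσNC, hπσ, hρσ⟩, hσne⟩ := h' 
  obtain ⟨a, b, hab, ⟨z, hz⟩, hinv⟩ := exists_interval_block hσNC hσne
  have hab' : a.val ≤ b.val := hab
  -- the doubled interval [2a, 2b+1]
  have harch : ∀ (θ : Setoid (Fin n)), θ ≤ σ →
      archSetoid θ ≤ ivSetoid (dEven a) (dOdd b) := by
    intro θ hθσ
    rw [arch_le_iff]
    intro j
    rw [ivSetoid_r, inIv_iff, inIv_iff]
    simp only [dEven_val, dOdd_val]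
    have hrel : σ.r j (nextP θ j) := Setoid.le_def.mp hθσ (rel_nextP θ j)
    constructor
    · intro ⟨h1, h2⟩
      have := hinv j (nextP θ j) (Fin.le_def.mpr (by omega)) (Fin.le_def.mpr (by omega)) hrel
      have e1 : a.val ≤ (nextP θ j).val := this.1
      have e2 : (nextP θ j).val ≤ b.val := this.2
      omega
    · intro ⟨h1, h2⟩
      have := hinv (nextP θ j) j (Fin.le_def.mpr (by omega)) (Fin.le_def.mpr (by omega))
        (σ.iseqv.symm hrel)
      have e1 : a.val ≤ j.val := this.1
      have e2 : j.val ≤ b.val := this.2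
      omega
  apply ncJoin_ne_top (ivSetoid_isNC (dEven a) (dOdd b)) (harch π hπσ) (harch ρ hρσ)
  rcases hz with hz | hz
  · apply ivSetoid_ne_top (u := dEven a) (v := dEven z)
    · rw [inIv_iff]
      simp only [dEven_val, dOdd_val]
      omega
    · rw [inIv_iff]
      simp only [dEven_val, dOdd_val]
      have : z.val < a.val := hz
      omega
  · apply ivSetoid_ne_top (u := dEven a) (v := dOdd z)
    · rw [inIv_iff]
      simp only [dEven_val, dOdd_val]
      omega
    · rw [inIv_iff]
      simp only [dEven_val, dOdd_val]
      have : b.val < z.val := hz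
      omega

lemma ml3 {π ρ : Setoid (Fin n)} (hπ : IsNC π) (hρ : IsNC ρ) (h : π ⊓ ρ ≠ ⊥) :
    ncJoin (archSetoid π) (archSetoid ρ) ≠ ⊤ := by
  have hex : ∃ i k : Fin n, i < k ∧ π.r i k ∧ ρ.r i k := by
    by_contra hc
    push_neg at hc
    apply h
    apply le_antisymm _ bot_le
    rw [Setoid.le_def]
    intro x y hxy
    have hx : π.r x y ∧ ρ.r x y := Setoid.inf_iff_and.mp hxy
    have : x = y := by
      rcases lt_trichotomy x y with ht | ht | ht
      · exact absurd hx.2 (hc x y ht hx.1)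
      · exact ht
      · exact absurd (ρ.iseqv.symm hx.2) (hc y x ht (π.iseqv.symm hx.1))
    exact this ▸ Setoid.refl' ⊥ x
  obtain ⟨i, k, hik, hπik, hρik⟩ := hex
  have hik' : i.val < k.val := hik
  have harch : ∀ (θ : Setoid (Fin n)), IsNC θ → θ.r i k →
      archSetoid θ ≤ ivSetoid (dOdd i) (dEven k) := by
    intro θ hθ hθik
    rw [arch_le_iff]
    intro j
    rw [ivSetoid_r, inIv_iff, inIv_iff]
    simp only [dEven_val, dOdd_val]
    have hs := nc_shift hθ hθik hik j
    constructor
    · intro ⟨h1, h2⟩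
      have := hs.mp ⟨Fin.le_def.mpr (by omega), Fin.lt_def.mpr (by omega)⟩
      have e1 : i.val < (nextP θ j).val := this.1
      have e2 : (nextP θ j).val ≤ k.val := this.2
      omega
    · intro ⟨h1, h2⟩
      have := hs.mpr ⟨Fin.lt_def.mpr (by omega), Fin.le_def.mpr (by omega)⟩
      have e1 : i.val ≤ j.val := this.1
      have e2 : j.val < k.val := this.2
      omega
  apply ncJoin_ne_top (ivSetoid_isNC (dOdd i) (dEven k)) (harch π hπ hπik) (harch ρ hρ hρik)
  apply ivSetoid_ne_top (u := dOdd i) (v := dEven i)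
  · rw [inIv_iff]
    simp only [dEven_val, dOdd_val]
    omega
  · rw [inIv_iff]
    simp only [dEven_val, dOdd_val]
    omega

end E

section F
variable {n : ℕ}

lemma ml1 {π ρ : Setoid (Fin n)} (h : ncJoin (archSetoid π) (archSetoid ρ) ≠ ⊤) :
    ncJoin π ρ ≠ ⊤ ∨ π ⊓ ρ ≠ ⊥ := by
  rw [ncJoin] at h
  have h' : ∃ τ ∈ {τ | IsNC τ ∧ archSetoid π ≤ τ ∧ archSetoid ρ ≤ τ}, τ ≠ ⊤ := by
    by_contra hc
    push_neg at hc
    exact h (sInf_eq_top.mpr hc)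
  obtain ⟨τ, ⟨hτNC, hπτ, hρτ⟩, hτne⟩ := h'
  obtain ⟨a, b, hab, ⟨z, hz⟩, hinv⟩ := exists_interval_block hτNC hτne
  have hab' : a.val ≤ b.val := hab
  have hn : 0 < n := by have := z.isLt; omega
  have hcl : ∀ (θ : Setoid (Fin n)), archSetoid θ ≤ τ → ∀ j : Fin n,
      (a.val ≤ 2*j.val+1 ∧ 2*j.val+1 ≤ b.val) ↔
      (a.val ≤ 2*(nextP θ j).val ∧ 2*(nextP θ j).val ≤ b.val) := by
    intro θ hθτ j
    have harch : τ.r (dOdd j) (dEven (nextP θ j)) := arch_le_iff.mp hθτ j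
    constructor
    · intro ⟨h1, h2⟩
      have := hinv (dOdd j) (dEven (nextP θ j)) (Fin.le_def.mpr h1) (Fin.le_def.mpr h2) harch
      exact ⟨this.1, this.2⟩
    · intro ⟨h1, h2⟩
      have := hinv (dEven (nextP θ j)) (dOdd j) (Fin.le_def.mpr h1) (Fin.le_def.mpr h2)
        (τ.iseqv.symm harch)
      exact ⟨this.1, this.2⟩
  have hclπ := hcl π hπτ
  have hclρ := hcl ρ hρτ
  have hzv := z.isLt
  rcases Nat.even_or_odd a.val with ⟨ia, hia⟩ | ⟨ia, hia⟩ <;>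
    rcases Nat.even_or_odd b.val with ⟨kb, hkb⟩ | ⟨kb, hkb⟩
  -- case 1 : a = 2 ia, b = 2 kb : impossible
  · exfalso
    have hian : ia < n := by have := a.isLt; omega
    have hkbn : kb < n := by have := b.isLt; omega
    obtain ⟨i, hiv⟩ : ∃ i : Fin n, i.val = ia := ⟨⟨ia, hian⟩, rfl⟩
    obtain ⟨k, hkv⟩ : ∃ k : Fin n, k.val = kb := ⟨⟨kb, hkbn⟩, rfl⟩
    apply no_shift_IcoIcc (S := π) (i := i) (k := k) (Fin.le_def.mpr (by omega))
    intro j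
    have := hclπ j
    constructor
    · intro ⟨h1, h2⟩
      have h1' : i.val ≤ j.val := h1
      have h2' : j.val < k.val := h2
      have := this.mp ⟨by omega, by omega⟩
      exact ⟨Fin.le_def.mpr (by omega), Fin.le_def.mpr (by omega)⟩
    · intro ⟨h1, h2⟩
      have h1' : i.val ≤ (nextP π j).val := h1
      have h2' : (nextP π j).val ≤ k.val := h2
      have := this.mpr ⟨by omega, by omega⟩
      exact ⟨Fin.le_def.mpr (by omega), Fin.lt_def.mpr (by omega)⟩
  -- case 2 : a = 2 ia, b = 2 kb + 1 : π ∨ ρ ≠ ⊤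
  · left
    have hian : ia < n := by have := a.isLt; omega
    have hkbn : kb < n := by have := b.isLt; omega
    obtain ⟨i, hiv⟩ : ∃ i : Fin n, i.val = ia := ⟨⟨ia, hian⟩, rfl⟩
    obtain ⟨k, hkv⟩ : ∃ k : Fin n, k.val = kb := ⟨⟨kb, hkbn⟩, rfl⟩
    have hik : ia ≤ kb := by omega
    have hσle : ∀ (θ : Setoid (Fin n)), archSetoid θ ≤ τ → θ ≤ ivSetoid i k := by
      intro θ hθτ
      have hclθ := hcl θ hθτ
      have hclosed : ∀ x : Fin n, inIv i k x → inIv i k (nextP θ x) := by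
        intro x hx
        rw [inIv_iff] at hx ⊢
        have h1 : i.val ≤ x.val := hx.1
        have h2 : x.val ≤ k.val := hx.2
        have := (hclθ x).mp ⟨by omega, by omega⟩
        exact ⟨by omega, by omega⟩
      rw [Setoid.le_def]
      intro x y hxy
      rw [ivSetoid_r]
      constructor
      · intro hx
        exact block_closed (s := {w | inIv i k w}) (fun w hw => hclosed w hw) hx hxy
      · intro hy
        exact block_closed (s := {w | inIv i k w}) (fun w hw => hclosed w hw) hy (θ.iseqv.symm hxy)
    apply ncJoin_ne_top (ivSetoid_isNC i k) (hσle π hπτ) (hσle ρ hρτ)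
    rcases hz with hzlt | hzlt
    · have hza : z.val < a.val := hzlt
      obtain ⟨v, hvv⟩ : ∃ v : Fin n, v.val = 0 := ⟨⟨0, hn⟩, rfl⟩
      apply ivSetoid_ne_top (u := i) (v := v)
      · rw [inIv_iff]; omega
      · rw [inIv_iff]; omega
    · have hza : b.val < z.val := hzlt
      obtain ⟨v, hvv⟩ : ∃ v : Fin n, v.val = n-1 := ⟨⟨n-1, by omega⟩, rfl⟩
      apply ivSetoid_ne_top (u := i) (v := v)
      · rw [inIv_iff]; omega
      · rw [inIv_iff]; omega
  -- case 3 : a = 2 ia + 1, b = 2 kb : π ∧ ρ ≠ ⊥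
  · right
    have hian : ia < n := by have := a.isLt; omega
    have hkbn : kb < n := by have := b.isLt; omega
    obtain ⟨i, hiv⟩ : ∃ i : Fin n, i.val = ia := ⟨⟨ia, hian⟩, rfl⟩
    obtain ⟨k, hkv⟩ : ∃ k : Fin n, k.val = kb := ⟨⟨kb, hkbn⟩, rfl⟩
    have hik : i < k := Fin.lt_def.mpr (by omega)
    have hrel : ∀ (θ : Setoid (Fin n)), archSetoid θ ≤ τ → θ.r i k := by
      intro θ hθτ
      apply rel_of_shift hik
      intro j
      have := hcl θ hθτ j
      constructor
      · intro ⟨h1, h2⟩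
        have h1' : i.val ≤ j.val := h1
        have h2' : j.val < k.val := h2
        have := this.mp ⟨by omega, by omega⟩
        exact ⟨Fin.lt_def.mpr (by omega), Fin.le_def.mpr (by omega)⟩
      · intro ⟨h1, h2⟩
        have h1' : i.val < (nextP θ j).val := h1
        have h2' : (nextP θ j).val ≤ k.val := h2
        have := this.mpr ⟨by omega, by omega⟩
        exact ⟨Fin.le_def.mpr (by omega), Fin.lt_def.mpr (by omega)⟩
    intro hbot
    have hik2 : (π ⊓ ρ).r i k := Setoid.inf_iff_and.mpr ⟨hrel π hπτ, hrel ρ hρτ⟩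
    rw [hbot] at hik2
    have : i = k := hik2
    have hvk : i.val = k.val := congrArg Fin.val this
    omega
  -- case 4 : a = 2 ia + 1, b = 2 kb + 1 : impossible
  · exfalso
    have hian : ia < n := by have := a.isLt; omega
    have hkbn : kb < n := by have := b.isLt; omega
    obtain ⟨i, hiv⟩ : ∃ i : Fin n, i.val = ia := ⟨⟨ia, hian⟩, rfl⟩
    obtain ⟨k, hkv⟩ : ∃ k : Fin n, k.val = kb := ⟨⟨kb, hkbn⟩, rfl⟩
    apply no_shift_IccIoc (S := π) (i := i) (k := k) (Fin.le_def.mpr (by omega))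
    intro j
    have := hclπ j
    constructor
    · intro ⟨h1, h2⟩
      have h1' : i.val ≤ j.val := h1
      have h2' : j.val ≤ k.val := h2
      have := this.mp ⟨by omega, by omega⟩
      exact ⟨Fin.lt_def.mpr (by omega), Fin.le_def.mpr (by omega)⟩
    · intro ⟨h1, h2⟩
      have h1' : i.val < (nextP π j).val := h1
      have h2' : (nextP π j).val ≤ k.val := h2
      have := this.mpr ⟨by omega, by omega⟩
      exact ⟨Fin.le_def.mpr (by omega), Fin.le_def.mpr (by omega)⟩

end F

/-- `A(π) ∨ A(ρ) = 1_{2n}` in `NC(2n)` iff `π ∨ ρ = 1_n` and `π ∧ ρ = 0_n`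
in `NC(n)`. -/
theorem arch_ncJoin_top_iff (n : ℕ) (π ρ : Setoid (Fin n))
    (hπ : IsNC π) (hρ : IsNC ρ) :
    ncJoin (archSetoid π) (archSetoid ρ) = ⊤ ↔
      (ncJoin π ρ = ⊤ ∧ π ⊓ ρ = ⊥) := by
  constructor
  · intro h
    constructor
    · by_contra hc; exact (ml2 hc) h
    · by_contra hc; exact (ml3 hπ hρ hc) h
  · rintro ⟨h1, h2⟩
    by_contra hc
    rcases ml1 hc with hh | hh
    · exact hh h1
    · exact hh h2
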